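/- Every minimal blocking set of a d-quasi-bipartite graph has size at most d + 2, and this bound is tight, witnessed by K_{d+2}. -/

import Mathlib

attribute [local instance] Classical.propDecidable

namespace VCKernel

variable {V : Type*} [Fintype V] [DecidableEq V]

/-- `S` is an independent set of `G`. -/
def IsIndep (G : SimpleGraph V) (S : Finset V) : Prop :=
  ∀ u ∈ S, ∀ v ∈ S, ¬ G.Adj u v

/-- Independence number of the subgraph of `G` induced on the vertex set `A`. -/
noncomputable def alphaOn (G : SimpleGraph V) (A : Set V) : ℕ :=
  sSup {n | ∃ S : Finset V, ↑S ⊆ A ∧ IsIndep G S ∧ S.card = n}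

/-- Independence number `α(G)`. -/
noncomputable def alpha (G : SimpleGraph V) : ℕ := alphaOn G Set.univ

/-- `Y` is a blocking set: deleting it decreases the independence number. -/
def IsBlocking (G : SimpleGraph V) (Y : Finset V) : Prop :=
  alphaOn G (Set.univ \ ↑Y) < alpha G

/-- `Y` is a minimal blocking set. -/
def IsMinBlocking (G : SimpleGraph V) (Y : Finset V) : Prop :=
  IsBlocking G Y ∧ ∀ Y' ⊂ Y, ¬ IsBlocking G Y'

/-- Open neighborhood of the vertex set `X'` in `G`. -/
def nbhd (G : SimpleGraph V) (X' : Finset V) : Set V :=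
  {v | ∃ u ∈ X', G.Adj u v}

/-- Number of conflicts induced by `X'` on the induced subgraph with vertex set `A`. -/
noncomputable def conf (G : SimpleGraph V) (A : Set V) (X' : Finset V) : ℕ :=
  alphaOn G A - alphaOn G (A \ nbhd G X')

/-- `C` is (the vertex set of) a connected component of the subgraph of `G`
induced on `A`. -/
def IsCompOf (G : SimpleGraph V) (A C : Set V) : Prop :=
  C ⊆ A ∧ (G.induce C).Connected ∧ ∀ u ∈ C, ∀ v ∈ A, G.Adj u v → v ∈ C

/-- Feasible solution to the Independent Set LP of the subgraph induced on `A`. -/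
def FeasISOn (G : SimpleGraph V) (A : Set V) (x : V → ℝ) : Prop :=
  (∀ v ∈ A, 0 ≤ x v ∧ x v ≤ 1) ∧
    ∀ u ∈ A, ∀ v ∈ A, G.Adj u v → x u + x v ≤ 1

/-- Half-integrality on `A`. -/
def HalfIntOn (A : Set V) (x : V → ℝ) : Prop :=
  ∀ v ∈ A, x v = 0 ∨ x v = 1/2 ∨ x v = 1

/-- Objective value of an LP solution on vertex set `A`. -/
noncomputable def weightOn (A : Set V) (x : V → ℝ) : ℝ :=
  ∑ v, if v ∈ A then x v else 0

/-- `x` is an optimum half-integral solution to the Independent Set LP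
of the subgraph induced on `A`. -/
def OptHIOn (G : SimpleGraph V) (A : Set V) (x : V → ℝ) : Prop :=
  FeasISOn G A x ∧ HalfIntOn A x ∧
    ∀ y : V → ℝ, FeasISOn G A y → HalfIntOn A y → weightOn A y ≤ weightOn A x

/-- Feasible solution to the Vertex Cover LP of `G`. -/
def FeasVC (G : SimpleGraph V) (x : V → ℝ) : Prop :=
  (∀ v, 0 ≤ x v ∧ x v ≤ 1) ∧ ∀ u v, G.Adj u v → 1 ≤ x u + x v

/-- Optimum value of the Independent Set LP of `G`. -/
noncomputable def lpIS (G : SimpleGraph V) : ℝ :=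
  sSup {w | ∃ x : V → ℝ, FeasISOn G Set.univ x ∧ w = ∑ v, x v}

/-- Optimum value of the Vertex Cover LP of `G`. -/
noncomputable def lpVC (G : SimpleGraph V) : ℝ :=
  sInf {w | ∃ x : V → ℝ, FeasVC G x ∧ w = ∑ v, x v}

/-- `C` is a vertex cover of `G`. -/
def IsVC (G : SimpleGraph V) (C : Finset V) : Prop :=
  ∀ u v, G.Adj u v → u ∈ C ∨ v ∈ C

/-- Vertex cover number of `G`. -/
noncomputable def vcNum (G : SimpleGraph V) : ℕ :=
  sInf {n | ∃ C : Finset V, IsVC G C ∧ C.card = n}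

/-- `Z` is a feedback vertex set of `G`. -/
def IsFVS (G : SimpleGraph V) (Z : Finset V) : Prop :=
  (G.induce ((↑Z : Set V)ᶜ)).IsAcyclic

/-- `Z` is an odd cycle transversal of `G`. -/
def IsOCT (G : SimpleGraph V) (Z : Finset V) : Prop :=
  (G.induce ((↑Z : Set V)ᶜ)).Colorable 2

/-- `G` is a `d`-quasi-forest: each connected component has a feedback
vertex set of size at most `d`. -/
def QuasiForest (G : SimpleGraph V) (d : ℕ) : Prop :=
  ∀ C : Set V, IsCompOf G Set.univ C →
    ∃ Z : Finset V, Z.card ≤ d ∧ (G.induce (C \ ↑Z)).IsAcyclic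

/-- `G` is `d`-quasi-bipartite: each connected component has an odd cycle
transversal of size at most `d`. -/
def QuasiBipartite (G : SimpleGraph V) (d : ℕ) : Prop :=
  ∀ C : Set V, IsCompOf G Set.univ C →
    ∃ Z : Finset V, Z.card ≤ d ∧ (G.induce (C \ ↑Z)).Colorable 2

/-- Feedback vertex set number of `G`. -/
noncomputable def fvsNum (G : SimpleGraph V) : ℕ :=
  sInf {n | ∃ Z : Finset V, IsFVS G Z ∧ Z.card = n}

/-- Odd cycle transversal number of `G`. -/
noncomputable def octNum (G : SimpleGraph V) : ℕ :=
  sInf {n | ∃ Z : Finset V, IsOCT G Z ∧ Z.card = n}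

/-- The subgraph of `G` induced on `A` has treedepth at most `k`
(elimination-forest characterization of treedepth). -/
def tdLE (G : SimpleGraph V) : ℕ → Set V → Prop
  | 0, A => A = ∅
  | (k+1), A => ∀ C : Set V, IsCompOf G A C → ∃ v ∈ C, tdLE G k (C \ {v})

set_option linter.unusedSectionVars false
set_option maxHeartbeats 1000000

section Aux

-- basic lemmas
lemma achSet_nonempty (G : SimpleGraph V) (A : Set V) :
    {n | ∃ S : Finset V, ↑S ⊆ A ∧ IsIndep G S ∧ S.card = n}.Nonempty :=
  ⟨0, ∅, by simp [IsIndep]⟩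

lemma achSet_bdd (G : SimpleGraph V) (A : Set V) :
    BddAbove {n | ∃ S : Finset V, ↑S ⊆ A ∧ IsIndep G S ∧ S.card = n} := by
  refine ⟨Fintype.card V, fun n hn => ?_⟩
  obtain ⟨S, _, _, hc⟩ := hn
  simpa [← hc] using Finset.card_le_univ S

lemma alphaOn_exists (G : SimpleGraph V) (A : Set V) :
    ∃ S : Finset V, ↑S ⊆ A ∧ IsIndep G S ∧ S.card = alphaOn G A :=
  Nat.sSup_mem (achSet_nonempty G A) (achSet_bdd G A)

lemma le_alphaOn (G : SimpleGraph V) (A : Set V) (S : Finset V)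
    (hS : ↑S ⊆ A) (hi : IsIndep G S) : S.card ≤ alphaOn G A :=
  le_csSup (achSet_bdd G A) ⟨S, hS, hi, rfl⟩

lemma alphaOn_mono (G : SimpleGraph V) {A B : Set V} (h : A ⊆ B) :
    alphaOn G A ≤ alphaOn G B := by
  refine csSup_le (achSet_nonempty G A) ?_
  rintro n ⟨S, hS, hi, rfl⟩
  exact le_alphaOn G B S (hS.trans h) hi

lemma alphaOn_le (G : SimpleGraph V) (A : Set V) {m : ℕ}
    (h : ∀ S : Finset V, ↑S ⊆ A → IsIndep G S → S.card ≤ m) : alphaOn G A ≤ m := by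
  refine csSup_le (achSet_nonempty G A) ?_
  rintro n ⟨S, hS, hi, rfl⟩
  exact h S hS hi

lemma IsIndep.subset {G : SimpleGraph V} {S T : Finset V} (h : IsIndep G T) (hs : S ⊆ T) :
    IsIndep G S := fun u hu v hv => h u (hs hu) v (hs hv)

-- additivity over parts with no edges
lemma alphaOn_union_eq (G : SimpleGraph V) {A B : Set V}
    (hd : ∀ v, v ∈ A → v ∈ B → False)
    (he : ∀ a ∈ A, ∀ b ∈ B, ¬ G.Adj a b) :
    alphaOn G (A ∪ B) = alphaOn G A + alphaOn G B := by
  apply le_antisymm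
  · refine alphaOn_le G _ (fun S hS hi => ?_)
    classical
    set SA := S.filter (fun v => v ∈ A) with hSA
    set SB := S.filter (fun v => v ∉ A) with hSB
    have hunion : SA ∪ SB = S := by
      ext v; simp [hSA, hSB]; tauto
    have hdisj : Disjoint SA SB := by
      rw [Finset.disjoint_left]
      intro a ha hb
      simp [hSA] at ha; simp [hSB] at hb
      exact hb.2 ha.2
    have hcard : SA.card + SB.card = S.card := by
      rw [← Finset.card_union_of_disjoint hdisj, hunion]
    have h1 : SA.card ≤ alphaOn G A := by
      refine le_alphaOn G A SA ?_ (hi.subset (Finset.filter_subset _ _))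
      intro v hv
      simp only [hSA, Finset.coe_filter, Set.mem_setOf_eq] at hv
      exact hv.2
    have h2 : SB.card ≤ alphaOn G B := by
      refine le_alphaOn G B SB ?_ (hi.subset (Finset.filter_subset _ _))
      intro v hv
      simp only [hSB, Finset.coe_filter, Set.mem_setOf_eq] at hv
      rcases hS (Finset.mem_coe.mpr hv.1) with h | h
      · exact absurd h hv.2
      · exact h
    omega
  · obtain ⟨SA, hSA, hiA, hcA⟩ := alphaOn_exists G A
    obtain ⟨SB, hSB, hiB, hcB⟩ := alphaOn_exists G B
    have hdisj : Disjoint SA SB := by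
      rw [Finset.disjoint_left]
      intro a ha hb
      exact hd a (hSA ha) (hSB hb)
    have hi : IsIndep G (SA ∪ SB) := by
      intro u hu v hv hadj
      rcases Finset.mem_union.mp hu with hu | hu <;> rcases Finset.mem_union.mp hv with hv | hv
      · exact hiA u hu v hv hadj
      · exact he u (hSA hu) v (hSB hv) hadj
      · exact he v (hSA hv) u (hSB hu) hadj.symm
      · exact hiB u hu v hv hadj
    have := le_alphaOn G (A ∪ B) (SA ∪ SB) ?_ hi
    · rwa [Finset.card_union_of_disjoint hdisj, hcA, hcB] at this
    · intro v hv
      rcases Finset.mem_union.mp (Finset.mem_coe.mp hv) with h | h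
      · exact Or.inl (hSA h)
      · exact Or.inr (hSB h)


-- the auxiliary restriction graph
def restrict (G : SimpleGraph V) (S : Finset V) : SimpleGraph V where
  Adj v w := G.Adj v w ∧ v ∈ S ∧ w ∈ S
  symm := by constructor; intro v w ⟨h, hv, hw⟩; exact ⟨h.symm, hw, hv⟩
  loopless := by constructor; intro v ⟨h, _⟩; exact G.ne_of_adj h rfl

lemma restrict_le (G : SimpleGraph V) (S : Finset V) : restrict G S ≤ G :=
  fun _ _ h => h.1

/-- Swap lemma: if I0, I' are two maximum independent sets (card = alpha) with
I0 ∩ Y = {y0}, I' ∩ Y = {y'}, and Y is blocking, then y' is reachable from y0. -/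
lemma swap_reachable (G : SimpleGraph V) (Y : Finset V)
    (hbl : alphaOn G (Set.univ \ ↑Y) < alpha G)
    (y0 y' : V) (hy0y' : y0 ≠ y')
    (I0 I' : Finset V) (hi0 : IsIndep G I0) (hi' : IsIndep G I')
    (hc0 : I0.card = alpha G) (hc' : I'.card = alpha G)
    (hY0 : I0 ∩ Y = {y0}) (hY' : I' ∩ Y = {y'}) :
    G.Reachable y0 y' := by
  classical
  set S : Finset V := (I0 ∪ I') \ (I0 ∩ I') with hS
  have hy0S : y0 ∈ S := by
    have h1 : y0 ∈ I0 ∩ Y := by rw [hY0]; exact Finset.mem_singleton_self y0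
    have h2 : y0 ∉ I' := by
      intro h
      have : y0 ∈ I' ∩ Y := Finset.mem_inter.mpr ⟨h, (Finset.mem_inter.mp h1).2⟩
      rw [hY'] at this
      exact hy0y' (Finset.mem_singleton.mp this)
    simp [hS, Finset.mem_sdiff, Finset.mem_union, Finset.mem_inter]
    exact ⟨Or.inl (Finset.mem_inter.mp h1).1, fun _ => h2⟩
  set H := restrict G S with hH
  set K : Finset V := S.filter (fun v => H.Reachable y0 v) with hK
  have hy0K : y0 ∈ K := by
    simp [hK]
    exact hy0S
  have hKS : K ⊆ S := Finset.filter_subset _ _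
  have hclose : ∀ v ∈ K, ∀ w ∈ S, G.Adj v w → w ∈ K := by
    intro v hv w hw hadj
    simp only [hK, Finset.mem_filter] at hv ⊢
    refine ⟨hw, hv.2.trans ?_⟩
    exact SimpleGraph.Adj.reachable (by exact ⟨hadj, hv.1, hw⟩)
  -- swapped sets
  set J : Finset V := (I0 \ K) ∪ (K ∩ I') with hJ
  set J2 : Finset V := (I' \ K) ∪ (K ∩ I0) with hJ2
  have hScap : ∀ v, v ∈ S → (v ∈ I0 ↔ v ∉ I') := by
    intro v hv
    simp only [hS, Finset.mem_sdiff, Finset.mem_union, Finset.mem_inter] at hv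
    constructor
    · intro h0 h'; exact hv.2 ⟨h0, h'⟩
    · intro h'; rcases hv.1 with h | h; exact h; exact absurd h h'
  have hJindep : IsIndep G J := by
    intro u hu v hv hadj
    rw [hJ] at hu hv
    have key : ∀ a b, a ∈ I0 \ K → b ∈ K ∩ I' → G.Adj a b → False := by
      intro a b ha hb hadj
      rcases Finset.mem_sdiff.mp ha with ⟨haI0, haK⟩
      rcases Finset.mem_inter.mp hb with ⟨hbK, hbI'⟩
      by_cases haI' : a ∈ I'
      · exact hi' a haI' b hbI' hadj
      · have haS : a ∈ S := by
          simp [hS, Finset.mem_sdiff, Finset.mem_union, Finset.mem_inter]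
          exact ⟨Or.inl haI0, fun _ => haI'⟩
        exact haK (hclose b hbK a haS hadj.symm)
    rcases Finset.mem_union.mp hu with hu | hu <;> rcases Finset.mem_union.mp hv with hv | hv
    · exact hi0 u (Finset.mem_sdiff.mp hu).1 v (Finset.mem_sdiff.mp hv).1 hadj
    · exact key u v hu hv hadj
    · exact key v u hv hu hadj.symm
    · exact hi' u (Finset.mem_inter.mp hu).2 v (Finset.mem_inter.mp hv).2 hadj
  have hJ2indep : IsIndep G J2 := by
    intro u hu v hv hadj
    rw [hJ2] at hu hv
    have key : ∀ a b, a ∈ I' \ K → b ∈ K ∩ I0 → G.Adj a b → False := by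
      intro a b ha hb hadj
      rcases Finset.mem_sdiff.mp ha with ⟨haI', haK⟩
      rcases Finset.mem_inter.mp hb with ⟨hbK, hbI0⟩
      by_cases haI0 : a ∈ I0
      · exact hi0 a haI0 b hbI0 hadj
      · have haS : a ∈ S := by
          simp [hS, Finset.mem_sdiff, Finset.mem_union, Finset.mem_inter]
          exact ⟨Or.inr haI', fun h => absurd h haI0⟩
        exact haK (hclose b hbK a haS hadj.symm)
    rcases Finset.mem_union.mp hu with hu | hu <;> rcases Finset.mem_union.mp hv with hv | hv
    · exact hi' u (Finset.mem_sdiff.mp hu).1 v (Finset.mem_sdiff.mp hv).1 hadj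
    · exact key u v hu hv hadj
    · exact key v u hv hu hadj.symm
    · exact hi0 u (Finset.mem_inter.mp hu).2 v (Finset.mem_inter.mp hv).2 hadj
  -- cardinalities
  have hdisj1 : Disjoint (I0 \ K) (K ∩ I') := by
    rw [Finset.disjoint_left]; intro a ha hb
    exact (Finset.mem_sdiff.mp ha).2 (Finset.mem_inter.mp hb).1
  have hdisj2 : Disjoint (I' \ K) (K ∩ I0) := by
    rw [Finset.disjoint_left]; intro a ha hb
    exact (Finset.mem_sdiff.mp ha).2 (Finset.mem_inter.mp hb).1
  have hcJ : J.card + (I0 ∩ K).card = alpha G + (K ∩ I').card := by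
    rw [hJ, Finset.card_union_of_disjoint hdisj1]
    have : (I0 \ K).card + (I0 ∩ K).card = I0.card := Finset.card_sdiff_add_card_inter I0 K
    have hle : (I0 ∩ K).card ≤ I0.card := Finset.card_le_card (Finset.inter_subset_left)
    omega
  have hcJ2 : J2.card + (I' ∩ K).card = alpha G + (K ∩ I0).card := by
    rw [hJ2, Finset.card_union_of_disjoint hdisj2]
    have : (I' \ K).card + (I' ∩ K).card = I'.card := Finset.card_sdiff_add_card_inter I' K
    have hle : (I' ∩ K).card ≤ I'.card := Finset.card_le_card (Finset.inter_subset_left)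
    omega
  have hJle : J.card ≤ alpha G := le_alphaOn G Set.univ J (by simp) hJindep
  have hJ2le : J2.card ≤ alpha G := le_alphaOn G Set.univ J2 (by simp) hJ2indep
  have hKI0 : (K ∩ I0).card = (I0 ∩ K).card := by rw [Finset.inter_comm]
  have hKI' : (K ∩ I').card = (I' ∩ K).card := by rw [Finset.inter_comm]
  have hJcard : J.card = alpha G := by omega
  -- if y' ∉ K then J misses Y entirely: contradiction with blocking
  by_cases hy'K : y' ∈ K
  · have : H.Reachable y0 y' := by
      simp only [hK, Finset.mem_filter] at hy'K
      exact hy'K.2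
    exact this.mono (restrict_le G S)
  · exfalso
    have hJY : ∀ v ∈ J, v ∉ Y := by
      intro v hv hvY
      rw [hJ] at hv
      rcases Finset.mem_union.mp hv with hv | hv
      · rcases Finset.mem_sdiff.mp hv with ⟨hvI0, hvK⟩
        have : v ∈ I0 ∩ Y := Finset.mem_inter.mpr ⟨hvI0, hvY⟩
        rw [hY0] at this
        rw [Finset.mem_singleton.mp this] at hvK
        exact hvK hy0K
      · rcases Finset.mem_inter.mp hv with ⟨hvK, hvI'⟩
        have : v ∈ I' ∩ Y := Finset.mem_inter.mpr ⟨hvI', hvY⟩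
        rw [hY'] at this
        rw [Finset.mem_singleton.mp this] at hvK
        exact hy'K hvK
    have : J.card ≤ alphaOn G (Set.univ \ ↑Y) := by
      refine le_alphaOn G _ J ?_ hJindep
      intro v hv
      exact ⟨Set.mem_univ v, fun h => hJY v (Finset.mem_coe.mp hv) (Finset.mem_coe.mp (by exact_mod_cast h))⟩
    omega


lemma reachable_set_isCompOf (G : SimpleGraph V) (y0 : V) :
    IsCompOf G Set.univ {v | G.Reachable y0 v} := by
  set C : Set V := {v | G.Reachable y0 v} with hC
  have hy0 : y0 ∈ C := SimpleGraph.Reachable.refl y0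
  have key : ∀ u v : V, G.Walk u v → ∀ (hu : u ∈ C) (hv : v ∈ C),
      (G.induce C).Reachable ⟨u, hu⟩ ⟨v, hv⟩ := by
    intro u v p
    induction p with
    | nil => intro hu hv; rfl
    | @cons a b c hab p ih =>
      intro ha hc
      have hb : b ∈ C := ha.trans hab.reachable
      have h1 : (G.induce C).Adj ⟨a, ha⟩ ⟨b, hb⟩ := hab
      exact (h1.reachable).trans (ih hb hc)
  refine ⟨Set.subset_univ C, ?_, ?_⟩
  · rw [SimpleGraph.connected_iff]
    refine ⟨?_, ⟨⟨y0, hy0⟩⟩⟩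
    intro a b
    obtain ⟨pa⟩ := a.2
    obtain ⟨pb⟩ := b.2
    have ra := key y0 a.1 pa hy0 a.2
    have rb := key y0 b.1 pb hy0 b.2
    exact ra.symm.trans rb
  · intro u hu v _ hadj
    exact hu.trans hadj.reachable


/-- The chain lemma: |⋃_{y∈S} J_y| + |⋂_{y∈S} J_y| ≥ 2α + |S| - 2. -/
lemma chain_star (G : SimpleGraph V) (C : Set V) (Y : Finset V) (aC : ℕ) (J : V → Finset V)
    (hJind : ∀ y ∈ Y, IsIndep G (J y))
    (hJcard : ∀ y ∈ Y, (J y).card = aC)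
    (hJY : ∀ y ∈ Y, J y ∩ Y = {y})
    (hJC : ∀ y ∈ Y, ↑(J y) ⊆ C)
    (hblock : ∀ T : Finset V, ↑T ⊆ C → IsIndep G T → (∀ v ∈ T, v ∉ Y) → T.card < aC) :
    ∀ (n : ℕ) (S : Finset V), S ⊆ Y → S.card = n → 2 ≤ n →
      2 * aC + n ≤ (S.biUnion J).card +
        (Finset.univ.filter (fun v => ∀ y ∈ S, v ∈ J y)).card + 2 := by
  intro n
  induction n with
  | zero => intro S _ _ h2; omega
  | succ n ih =>
    intro S hSY hcard h2
    rcases Nat.lt_or_ge n 2 with hn | hn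
    · -- base case : n + 1 = 2
      have hn2 : n = 1 := by omega
      subst hn2
      obtain ⟨a, b, hab, hS⟩ := Finset.card_eq_two.mp (by omega : S.card = 2)
      subst hS
      have haY : a ∈ Y := hSY (by simp)
      have hbY : b ∈ Y := hSY (by simp)
      have hU : ({a, b} : Finset V).biUnion J = J a ∪ J b := by
        ext v; simp [Finset.mem_biUnion]
      have hN : (Finset.univ.filter (fun v => ∀ y ∈ ({a, b} : Finset V), v ∈ J y))
          = J a ∩ J b := by
        ext v; simp
      rw [hU, hN]
      have := Finset.card_union_add_card_inter (J a) (J b)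
      have hca := hJcard a haY
      have hcb := hJcard b hbY
      omega
    · -- step
      have hSne : S.Nonempty := by
        rw [← Finset.card_pos]; omega
      obtain ⟨a, ha⟩ := hSne
      set S' := S.erase a with hS'
      have hScard' : S'.card = n := by
        rw [hS', Finset.card_erase_of_mem ha]; omega
      have hS'Y : S' ⊆ Y := (Finset.erase_subset a S).trans hSY
      have haY : a ∈ Y := hSY ha
      have IH := ih S' hS'Y hScard' hn
      set U' := S'.biUnion J with hU'
      set N' := Finset.univ.filter (fun v => ∀ y ∈ S', v ∈ J y) with hN'
      set Ja := J a with hJa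
      have hUeq : S.biUnion J = U' ∪ Ja := by
        ext v
        simp only [hU', Finset.mem_biUnion, Finset.mem_union, hS', hJa]
        constructor
        · rintro ⟨y, hy, hv⟩
          by_cases hya : y = a
          · subst hya; exact Or.inr hv
          · exact Or.inl ⟨y, Finset.mem_erase.mpr ⟨hya, hy⟩, hv⟩
        · rintro (⟨y, hy, hv⟩ | hv)
          · exact ⟨y, (Finset.erase_subset a S) hy, hv⟩
          · exact ⟨a, ha, hv⟩
      have hNeq : (Finset.univ.filter (fun v => ∀ y ∈ S, v ∈ J y)) = N' ∩ Ja := by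
        ext v
        simp only [hN', Finset.mem_filter, Finset.mem_inter, Finset.mem_univ, true_and, hS', hJa]
        constructor
        · intro h
          exact ⟨fun y hy => h y ((Finset.erase_subset a S) hy), h a ha⟩
        · rintro ⟨h1, h2⟩ y hy
          by_cases hya : y = a
          · subst hya; exact h2
          · exact h1 y (Finset.mem_erase.mpr ⟨hya, hy⟩)
      -- the two distinct elements of S'
      have hS'card2 : 2 ≤ S'.card := by omega
      obtain ⟨b1, hb1⟩ : S'.Nonempty := by rw [← Finset.card_pos]; omega
      obtain ⟨b2, hb2, hb12⟩ : ∃ b ∈ S', b ≠ b1 := by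
        have := Finset.exists_mem_ne (by omega : 1 < S'.card) b1
        tauto
      -- T
      set T := (U' ∩ Ja) ∪ (N' \ Ja) with hT
      have hTdisj : Disjoint (U' ∩ Ja) (N' \ Ja) := by
        rw [Finset.disjoint_left]
        intro x hx hx'
        exact (Finset.mem_sdiff.mp hx').2 (Finset.mem_inter.mp hx).2
      have hmemN' : ∀ v ∈ N', ∀ y ∈ S', v ∈ J y := by
        intro v hv
        simpa [hN'] using (Finset.mem_filter.mp hv).2
      have hmemU' : ∀ v ∈ U', ∃ y ∈ S', v ∈ J y := by
        intro v hv
        simpa [hU'] using Finset.mem_biUnion.mp hv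
      have hTC : ↑T ⊆ C := by
        intro v hv
        rcases Finset.mem_union.mp (Finset.mem_coe.mp hv) with h | h
        · exact hJC a haY (Finset.mem_inter.mp h).2
        · exact hJC b1 (hS'Y hb1) (hmemN' v (Finset.mem_sdiff.mp h).1 b1 hb1)
      have hTind : IsIndep G T := by
        intro u hu v hv hadj
        have key : ∀ x, x ∈ T → ∀ z, z ∈ S' → (x ∈ Ja ∧ (x ∈ U' → True)) ∨ True := by
          intro x _ z _; right; trivial
        -- find a common independent set containing u and v
        rcases Finset.mem_union.mp hu with hu' | hu' <;> rcases Finset.mem_union.mp hv with hv' | hv'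
        · exact hJind a haY u (Finset.mem_inter.mp hu').2 v (Finset.mem_inter.mp hv').2 hadj
        · obtain ⟨y, hyS', huy⟩ := hmemU' u (Finset.mem_inter.mp hu').1
          have hvy : v ∈ J y := hmemN' v (Finset.mem_sdiff.mp hv').1 y hyS'
          exact hJind y (hS'Y hyS') u huy v hvy hadj
        · obtain ⟨y, hyS', hvy⟩ := hmemU' v (Finset.mem_inter.mp hv').1
          have huy : u ∈ J y := hmemN' u (Finset.mem_sdiff.mp hu').1 y hyS'
          exact hJind y (hS'Y hyS') u huy v hvy hadj
        · have hu1 : u ∈ J b1 := hmemN' u (Finset.mem_sdiff.mp hu').1 b1 hb1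
          have hv1 : v ∈ J b1 := hmemN' v (Finset.mem_sdiff.mp hv').1 b1 hb1
          exact hJind b1 (hS'Y hb1) u hu1 v hv1 hadj
      have hTY : ∀ v ∈ T, v ∉ Y := by
        intro v hv hvY
        rcases Finset.mem_union.mp hv with h | h
        · obtain ⟨y, hyS', hvy⟩ := hmemU' v (Finset.mem_inter.mp h).1
          have h1 : v ∈ J y ∩ Y := Finset.mem_inter.mpr ⟨hvy, hvY⟩
          rw [hJY y (hS'Y hyS')] at h1
          have h2 : v ∈ Ja ∩ Y := Finset.mem_inter.mpr ⟨(Finset.mem_inter.mp h).2, hvY⟩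
          rw [hJa, hJY a haY] at h2
          have : y = a := by
            rw [← Finset.mem_singleton.mp h1, Finset.mem_singleton.mp h2]
          exact (Finset.mem_erase.mp hyS').1 this
        · have hN := (Finset.mem_sdiff.mp h).1
          have h1 : v ∈ J b1 ∩ Y := Finset.mem_inter.mpr ⟨hmemN' v hN b1 hb1, hvY⟩
          have h2 : v ∈ J b2 ∩ Y := Finset.mem_inter.mpr ⟨hmemN' v hN b2 hb2, hvY⟩
          rw [hJY b1 (hS'Y hb1)] at h1
          rw [hJY b2 (hS'Y hb2)] at h2
          exact hb12 (by rw [← Finset.mem_singleton.mp h2, Finset.mem_singleton.mp h1])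
      have hTcard : T.card < aC := hblock T hTC hTind hTY
      have hTcard' : T.card = (U' ∩ Ja).card + (N' \ Ja).card :=
        Finset.card_union_of_disjoint hTdisj
      have e1 : (U' ∪ Ja).card + (U' ∩ Ja).card = U'.card + Ja.card :=
        Finset.card_union_add_card_inter U' Ja
      have e2 : (N' ∩ Ja).card + (N' \ Ja).card = N'.card :=
        Finset.card_inter_add_card_sdiff N' Ja
      have e3 : Ja.card = aC := hJcard a haY
      rw [hUeq, hNeq]
      omega


/-- The local main lemma. -/
lemma local_bound (G : SimpleGraph V) (C : Set V) (Z Y : Finset V) (aC : ℕ) (J : V → Finset V)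
    (hYC : ↑Y ⊆ C) (hY2 : 2 ≤ Y.card)
    (hJind : ∀ y ∈ Y, IsIndep G (J y))
    (hJcard : ∀ y ∈ Y, (J y).card = aC)
    (hJY : ∀ y ∈ Y, J y ∩ Y = {y})
    (hJC : ∀ y ∈ Y, ↑(J y) ⊆ C)
    (hyJ : ∀ y ∈ Y, y ∈ J y)
    (haC : ∀ T : Finset V, ↑T ⊆ C → IsIndep G T → T.card ≤ aC)
    (hblock : ∀ T : Finset V, ↑T ⊆ C → IsIndep G T → (∀ v ∈ T, v ∉ Y) → T.card < aC)
    (hcol : (G.induce (C \ ↑Z)).Colorable 2) :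
    Y.card ≤ Z.card + 2 := by
  classical
  obtain ⟨col⟩ := hcol
  obtain ⟨b1, hb1⟩ : Y.Nonempty := by rw [← Finset.card_pos]; omega
  set U := Y.biUnion J with hU
  set N := Finset.univ.filter (fun v => ∀ y ∈ Y, v ∈ J y) with hN
  have hchain := chain_star G C Y aC J hJind hJcard hJY hJC hblock Y.card Y (subset_refl Y) rfl hY2
  rw [← hU, ← hN] at hchain
  set Vh := (U ∪ Y) \ N with hVh
  have hNU : N ⊆ U := by
    intro v hv
    rw [hN, Finset.mem_filter] at hv
    exact Finset.mem_biUnion.mpr ⟨b1, hb1, hv.2 b1 hb1⟩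
  have hUC : ↑U ⊆ C := by
    intro v hv
    obtain ⟨y, hy, hvy⟩ := Finset.mem_biUnion.mp (Finset.mem_coe.mp hv)
    exact hJC y hy hvy
  have hVhC : ↑Vh ⊆ C := by
    intro v hv
    rcases Finset.mem_union.mp (Finset.mem_sdiff.mp (Finset.mem_coe.mp hv)).1 with h | h
    · exact hUC h
    · exact hYC h
  set f : V → Fin 2 := fun v => if h : v ∈ C \ (↑Z : Set V) then col ⟨v, h⟩ else 0 with hf
  set A0 := (Vh \ Z).filter (fun v => f v = 0) with hA0
  set A1 := (Vh \ Z).filter (fun v => ¬ f v = 0) with hA1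
  have hAcard : A0.card + A1.card = (Vh \ Z).card :=
    Finset.card_filter_add_card_filter_not _
  -- pick the bigger side
  obtain ⟨Ai, hAiVh, hAisame, hAibig⟩ :
      ∃ Ai : Finset V, Ai ⊆ Vh \ Z ∧ (∀ u ∈ Ai, ∀ v ∈ Ai, f u = f v) ∧
        (Vh \ Z).card ≤ 2 * Ai.card := by
    rcases Nat.le_or_le (A0.card + A0.card) (A0.card + A1.card) with h | h
    · refine ⟨A1, Finset.filter_subset _ _, ?_, by omega⟩
      intro u hu v hv
      have hu' := (Finset.mem_filter.mp hu).2
      have hv' := (Finset.mem_filter.mp hv).2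
      have : ∀ x : Fin 2, ¬ x = 0 → x = 1 := by decide
      rw [this _ hu', this _ hv']
    · refine ⟨A0, Finset.filter_subset _ _, ?_, by omega⟩
      intro u hu v hv
      rw [(Finset.mem_filter.mp hu).2, (Finset.mem_filter.mp hv).2]
  -- W
  set W := N ∪ Ai with hW
  have hWdisj : Disjoint N Ai := by
    rw [Finset.disjoint_right]
    intro v hv
    have := (Finset.mem_sdiff.mp ((hAiVh hv))).1
    exact (Finset.mem_sdiff.mp this).2
  have hAiC : ∀ v ∈ Ai, v ∈ C \ (↑Z : Set V) := by
    intro v hv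
    have h1 := Finset.mem_sdiff.mp (hAiVh hv)
    exact ⟨hVhC (Finset.mem_coe.mpr h1.1), fun hz => h1.2 (by exact_mod_cast hz)⟩
  have hWC : ↑W ⊆ C := by
    intro v hv
    rcases Finset.mem_union.mp (Finset.mem_coe.mp hv) with h | h
    · exact hJC b1 hb1 ((Finset.mem_filter.mp h).2 b1 hb1)
    · exact (hAiC v h).1
  have hWind : IsIndep G W := by
    intro u hu v hv hadj
    have hmix : ∀ x z, x ∈ N → z ∈ Ai → ¬ G.Adj x z := by
      intro x z hx hz hadjxz
      have hzVh := hAiVh hz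
      have hzU : z ∈ U ∪ Y := (Finset.mem_sdiff.mp (Finset.mem_sdiff.mp hzVh).1).1
      have hxJ : ∀ y ∈ Y, x ∈ J y := by
        intro y hy; exact (Finset.mem_filter.mp hx).2 y hy
      rcases Finset.mem_union.mp hzU with h | h
      · obtain ⟨y, hy, hzy⟩ := Finset.mem_biUnion.mp h
        exact hJind y hy x (hxJ y hy) z hzy hadjxz
      · exact hJind z h x (hxJ z h) z (hyJ z h) hadjxz
    rcases Finset.mem_union.mp hu with hu' | hu' <;> rcases Finset.mem_union.mp hv with hv' | hv'
    · exact hJind b1 hb1 u ((Finset.mem_filter.mp hu').2 b1 hb1)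
        v ((Finset.mem_filter.mp hv').2 b1 hb1) hadj
    · exact hmix u v hu' hv' hadj
    · exact hmix v u hv' hu' hadj.symm
    · -- both in Ai : same color, adjacent in induced graph, contradiction
      have hu2 := hAiC u hu'
      have hv2 := hAiC v hv'
      have hadj' : (G.induce (C \ (↑Z : Set V))).Adj ⟨u, hu2⟩ ⟨v, hv2⟩ := by
        simpa using hadj
      have := col.valid hadj'
      apply this
      have h1 : f u = col ⟨u, hu2⟩ := by rw [hf]; simp [hu2]
      have h2 : f v = col ⟨v, hv2⟩ := by rw [hf]; simp [hv2]
      rw [← h1, ← h2]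
      exact hAisame u hu' v hv'
  have hWcard : W.card ≤ aC := haC W hWC hWind
  have hWcard' : W.card = N.card + Ai.card := Finset.card_union_of_disjoint hWdisj
  have e1 : (Vh \ Z).card + (Vh ∩ Z).card = Vh.card := Finset.card_sdiff_add_card_inter Vh Z
  have e2 : (Vh ∩ Z).card ≤ Z.card := Finset.card_le_card (Finset.inter_subset_right)
  have e3 : Vh.card + N.card = (U ∪ Y).card := by
    rw [hVh]
    exact Finset.card_sdiff_add_card_eq_card (hNU.trans Finset.subset_union_left)
  have e4 : U.card ≤ (U ∪ Y).card := Finset.card_le_card Finset.subset_union_left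
  omega


theorem main_bound (d : ℕ) (G : SimpleGraph V) (Y : Finset V)
    (hqb : QuasiBipartite G d) (hmb : IsMinBlocking G Y) : Y.card ≤ d + 2 := by
  classical
  obtain ⟨hbl, hmin⟩ := hmb
  have hbl' : alphaOn G (Set.univ \ ↑Y) < alpha G := hbl
  rcases Nat.le_or_ge Y.card 2 with hY2 | hY2
  · omega
  -- global max independent sets
  have global_I : ∀ y ∈ Y, ∃ I : Finset V, IsIndep G I ∧ I.card = alpha G ∧ I ∩ Y = {y} := by
    intro y hy
    have hsub : Y.erase y ⊂ Y := Finset.erase_ssubset hy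
    have hnb := hmin _ hsub
    rw [IsBlocking, not_lt] at hnb
    have hle : alphaOn G (Set.univ \ ↑(Y.erase y)) ≤ alpha G :=
      alphaOn_mono G (Set.diff_subset.trans (subset_refl _))
    obtain ⟨S, hS, hind, hcard⟩ := alphaOn_exists G (Set.univ \ ↑(Y.erase y))
    have hScard : S.card = alpha G := by omega
    have hyS : y ∈ S := by
      by_contra hyS
      have hS' : ↑S ⊆ Set.univ \ (↑Y : Set V) := by
        intro v hv
        refine ⟨Set.mem_univ v, fun hvY => ?_⟩
        have hvY' : v ∈ Y := by exact_mod_cast hvY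
        have : v ∈ Y.erase y := Finset.mem_erase.mpr
          ⟨fun h => hyS (h ▸ Finset.mem_coe.mp hv), hvY'⟩
        exact (hS hv).2 (by exact_mod_cast this)
      have := le_alphaOn G (Set.univ \ ↑Y) S hS' hind
      omega
    refine ⟨S, hind, hScard, ?_⟩
    ext v
    simp only [Finset.mem_inter, Finset.mem_singleton]
    constructor
    · rintro ⟨hvS, hvY⟩
      by_contra hvy
      have : v ∈ Y.erase y := Finset.mem_erase.mpr ⟨hvy, hvY⟩
      exact (hS (Finset.mem_coe.mpr hvS)).2 (by exact_mod_cast this)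
    · rintro rfl
      exact ⟨hyS, hy⟩
  choose Ig hIg using global_I
  -- base point
  obtain ⟨y0, hy0⟩ : Y.Nonempty := by rw [← Finset.card_pos]; omega
  set C : Set V := {v | G.Reachable y0 v} with hC
  have hYC : ↑Y ⊆ C := by
    intro y' hy'
    have hy'Y : y' ∈ Y := Finset.mem_coe.mp hy'
    by_cases h : y' = y0
    · subst h; exact SimpleGraph.Reachable.refl y'
    · obtain ⟨hi0, hc0, hY0⟩ := hIg y0 hy0
      obtain ⟨hi', hc', hY'⟩ := hIg y' hy'Y
      exact swap_reachable G Y hbl y0 y' (fun hh => h hh.symm) _ _ hi0 hi' hc0 hc' hY0 hY'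
  have hcomp : IsCompOf G Set.univ C := reachable_set_isCompOf G y0
  obtain ⟨Z, hZd, hZcol⟩ := hqb C hcomp
  -- localization
  have hnoedge : ∀ a ∈ C, ∀ b ∈ Cᶜ, ¬ G.Adj a b := by
    intro a ha b hb hadj
    exact hb (ha.trans hadj.reachable)
  have hdisj : ∀ (A : Set V), A ⊆ C → ∀ v, v ∈ A → v ∈ Cᶜ → False := by
    intro A hA v hv hv'; exact hv' (hA hv)
  have hsplit : ∀ (Y' : Finset V), ↑Y' ⊆ C →
      alphaOn G (Set.univ \ ↑Y') = alphaOn G (C \ ↑Y') + alphaOn G Cᶜ := by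
    intro Y' hY'
    have hseteq : (C \ ↑Y') ∪ Cᶜ = Set.univ \ ↑Y' := by
      ext v
      simp only [Set.mem_union, Set.mem_diff, Set.mem_compl_iff, Set.mem_univ, true_and]
      constructor
      · rintro (⟨_, h⟩ | h)
        · exact h
        · exact fun hv => h (hY' hv)
      · intro h
        by_cases hvC : v ∈ C
        · exact Or.inl ⟨hvC, h⟩
        · exact Or.inr hvC
    rw [← hseteq]
    exact alphaOn_union_eq G (hdisj _ Set.diff_subset) (fun a ha => hnoedge a ha.1)
  have hsplit0 : alpha G = alphaOn G C + alphaOn G Cᶜ := by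
    have := hsplit ∅ (by simp)
    simpa [alpha] using this
  set aC := alphaOn G C with haCdef
  have hblockC : alphaOn G (C \ ↑Y) < aC := by
    have h1 := hsplit Y hYC
    omega
  have heraseC : ∀ y ∈ Y, alphaOn G (C \ ↑(Y.erase y)) = aC := by
    intro y hy
    have h1 := hsplit (Y.erase y) ((Finset.coe_subset.mpr (Finset.erase_subset y Y)).trans hYC)
    have hnb := hmin _ (Finset.erase_ssubset hy)
    rw [IsBlocking, not_lt] at hnb
    have hle : alphaOn G (C \ ↑(Y.erase y)) ≤ aC := alphaOn_mono G Set.diff_subset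
    omega
  -- local independent sets
  have local_J : ∀ y : V, ∃ Jy : Finset V, y ∈ Y →
      IsIndep G Jy ∧ Jy.card = aC ∧ Jy ∩ Y = {y} ∧ ↑Jy ⊆ C ∧ y ∈ Jy := by
    intro y
    by_cases hy : y ∈ Y
    · obtain ⟨S, hS, hind, hcard⟩ := alphaOn_exists G (C \ ↑(Y.erase y))
      rw [heraseC y hy] at hcard
      have hSC : ↑S ⊆ C := hS.trans Set.diff_subset
      have hyS : y ∈ S := by
        by_contra hyS
        have hS' : ↑S ⊆ C \ (↑Y : Set V) := by
          intro v hv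
          refine ⟨(hS hv).1, fun hvY => ?_⟩
          have hvY' : v ∈ Y := by exact_mod_cast hvY
          have : v ∈ Y.erase y := Finset.mem_erase.mpr
            ⟨fun h => hyS (h ▸ Finset.mem_coe.mp hv), hvY'⟩
          exact (hS hv).2 (by exact_mod_cast this)
        have := le_alphaOn G (C \ ↑Y) S hS' hind
        omega
      refine ⟨S, fun _ => ⟨hind, hcard, ?_, hSC, hyS⟩⟩
      ext v
      simp only [Finset.mem_inter, Finset.mem_singleton]
      constructor
      · rintro ⟨hvS, hvY⟩
        by_contra hvy
        have : v ∈ Y.erase y := Finset.mem_erase.mpr ⟨hvy, hvY⟩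
        exact (hS (Finset.mem_coe.mpr hvS)).2 (by exact_mod_cast this)
      · rintro rfl
        exact ⟨hyS, hy⟩
    · exact ⟨∅, fun h => absurd h hy⟩
  choose J hJ using local_J
  have hfinal := local_bound G C Z Y aC J hYC hY2
    (fun y hy => (hJ y hy).1)
    (fun y hy => (hJ y hy).2.1)
    (fun y hy => (hJ y hy).2.2.1)
    (fun y hy => (hJ y hy).2.2.2.1)
    (fun y hy => (hJ y hy).2.2.2.2)
    (fun T hT hind => le_alphaOn G C T hT hind)
    (fun T hT hind hTY => by
      refine lt_of_le_of_lt (le_alphaOn G (C \ ↑Y) T ?_ hind) hblockC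
      intro v hv
      exact ⟨hT hv, fun hvY => hTY v (Finset.mem_coe.mp hv) (by exact_mod_cast hvY)⟩)
    hZcol
  omega


-- tightness
lemma top_quasi (d : ℕ) : QuasiBipartite (⊤ : SimpleGraph (Fin (d+2))) d := by
  intro C _
  have h01 : (0 : Fin (d+2)) ≠ 1 := by
    simp [Fin.ext_iff]
  refine ⟨Finset.univ \ {0, 1}, ?_, ?_⟩
  · rw [Finset.card_sdiff_of_subset (Finset.subset_univ _)]
    rw [Finset.card_univ, Fintype.card_fin, Finset.card_insert_of_notMem (by simp [h01]),
      Finset.card_singleton]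
    omega
  · refine ⟨⟨fun v => if v.1 = 0 then 0 else 1, ?_⟩⟩
    intro a b hadj
    have hadj' : (a : Fin (d+2)) ≠ (b : Fin (d+2)) := by
      have : (⊤ : SimpleGraph (Fin (d+2))).Adj a.1 b.1 := hadj
      exact this.ne
    have ha : a.1 = 0 ∨ a.1 = 1 := by
      have := a.2.2
      simp only [Finset.coe_sdiff, Finset.coe_univ, Set.mem_diff] at this
      by_contra hc
      push_neg at hc
      apply this
      refine ⟨Set.mem_univ _, ?_⟩
      simp only [Finset.coe_insert, Finset.coe_singleton, Set.mem_insert_iff,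
        Set.mem_singleton_iff]
      tauto
    have hb : b.1 = 0 ∨ b.1 = 1 := by
      have := b.2.2
      simp only [Finset.coe_sdiff, Finset.coe_univ, Set.mem_diff] at this
      by_contra hc
      push_neg at hc
      apply this
      refine ⟨Set.mem_univ _, ?_⟩
      simp only [Finset.coe_insert, Finset.coe_singleton, Set.mem_insert_iff,
        Set.mem_singleton_iff]
      tauto
    rcases ha with ha | ha <;> rcases hb with hb | hb
    · exact absurd (ha.trans hb.symm) hadj'
    · simp [ha, hb, h01]
    · simp [ha, hb, h01]
    · exact absurd (ha.trans hb.symm) hadj'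

lemma top_alpha (d : ℕ) : alpha (⊤ : SimpleGraph (Fin (d+2))) = 1 := by
  apply le_antisymm
  · apply alphaOn_le
    intro S _ hi
    rw [Finset.card_le_one]
    intro u hu v hv
    by_contra huv
    exact hi u hu v hv huv
  · have := le_alphaOn (⊤ : SimpleGraph (Fin (d+2))) Set.univ {0} (by simp) ?_
    · simpa [alpha] using this
    · intro u hu v hv hadj
      rw [Finset.mem_singleton] at hu hv
      subst hu; subst hv
      exact hadj.ne rfl

lemma top_minblocking (d : ℕ) :
    IsMinBlocking (⊤ : SimpleGraph (Fin (d+2))) Finset.univ := by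
  constructor
  · rw [IsBlocking, top_alpha]
    have : alphaOn (⊤ : SimpleGraph (Fin (d+2))) (Set.univ \ ↑(Finset.univ : Finset (Fin (d+2)))) ≤ 0 := by
      apply alphaOn_le
      intro S hS _
      have : S = ∅ := by
        rw [Finset.eq_empty_iff_forall_notMem]
        intro v hv
        have := hS (Finset.mem_coe.mpr hv)
        simp at this
      simp [this]
    omega
  · intro Y' hY' hbl
    obtain ⟨v, hv⟩ := Finset.exists_of_ssubset hY'
    rw [IsBlocking, top_alpha] at hbl
    have h1 : 1 ≤ alphaOn (⊤ : SimpleGraph (Fin (d+2))) (Set.univ \ ↑Y') := by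
      have := le_alphaOn (⊤ : SimpleGraph (Fin (d+2))) (Set.univ \ ↑Y') {v} ?_ ?_
      · simpa using this
      · intro u hu
        rw [Finset.coe_singleton, Set.mem_singleton_iff] at hu
        subst hu
        exact ⟨Set.mem_univ u, fun h => hv.2 (by exact_mod_cast h)⟩
      · intro u hu w hw hadj
        rw [Finset.mem_singleton] at hu hw
        subst hu; subst hw
        exact hadj.ne rfl
    omega


end Aux
/-- Every minimal blocking set of a `d`-quasi-bipartite graph has size at most
`d + 2`, and this bound is tight, witnessed by `K_{d+2}`. -/
theorem stmt9 (d : ℕ) :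
    (∀ (W : Type) [Fintype W] [DecidableEq W] (G : SimpleGraph W)
        (Y : Finset W), QuasiBipartite G d → IsMinBlocking G Y →
          Y.card ≤ d + 2) ∧
    QuasiBipartite (⊤ : SimpleGraph (Fin (d+2))) d ∧
    IsMinBlocking (⊤ : SimpleGraph (Fin (d+2))) Finset.univ ∧
    (Finset.univ : Finset (Fin (d+2))).card = d + 2 := by
  refine ⟨fun W _ _ G Y hqb hmb => main_bound d G Y hqb hmb, top_quasi d, top_minblocking d, ?_⟩
  rw [Finset.card_univ, Fintype.card_fin]

end VCKernel
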